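/- (Bounded geodesic image for contact graphs.) Let X be a CAT(0) cube complex, H a hyperplane, and γ ⊆ X a combinatorial geodesic whose image in the contact graph 𝒞X is disjoint from the closed 1-ball around H in the crossing graph. Then the projection π_H(γ) to the contact graph of H is a single clique; in particular, all 0-cubes of γ have the same projection to 𝒞H. -/

import Mathlib

/-- A combinatorial model of a CAT(0) cube complex: its `0`--skeleton is a
median graph, encoded by its wallspace (hyperplanes and halfspaces), with
the graph metric on the `1`--skeleton equal to the wall-counting metric. -/
structure CubeComplex where
  /-- vertices (`0`--cubes) -/
  V : Type
  /-- hyperplanes (walls) -/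
  Wall : Type
  /-- halfspace membership: `side w x` means `x` is on the positive side of `w` -/
  side : Wall → V → Prop
  /-- graph metric on the `1`--skeleton -/
  d : V → V → ℕ
  sepFinite : ∀ x y : V, {w : Wall | ¬ (side w x ↔ side w y)}.Finite
  d_eq : ∀ x y : V, d x y = {w : Wall | ¬ (side w x ↔ side w y)}.ncard
  /-- every hyperplane is dual to some `1`--cube -/
  wall_dual : ∀ w : Wall, ∃ x y : V, d x y = 1 ∧ ¬ (side w x ↔ side w y)
  /-- the median operation of the underlying median graph -/
  median : V → V → V → V
  median_xy : ∀ x y z, d x (median x y z) + d (median x y z) y = d x y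
  median_yz : ∀ x y z, d y (median x y z) + d (median x y z) z = d y z
  median_xz : ∀ x y z, d x (median x y z) + d (median x y z) z = d x z

namespace CubeComplex

variable (X : CubeComplex)

/-- the hyperplane `w` separates `x` from `y` -/
def Sep (w : X.Wall) (x y : X.V) : Prop := ¬ (X.side w x ↔ X.side w y)

/-- the hyperplane `w` separates `x` from the set `K` -/
def SepFrom (w : X.Wall) (x : X.V) (K : Set X.V) : Prop := ∀ k ∈ K, X.Sep w x k

/-- `z` lies on a geodesic from `x` to `y` -/
def Btw (x z y : X.V) : Prop := X.d x z + X.d z y = X.d x y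

/-- a convex (interval-closed, equivalently geodesically convex) subset -/
def IsConvex (K : Set X.V) : Prop := ∀ a ∈ K, ∀ b ∈ K, ∀ z, X.Btw a z b → z ∈ K

/-- the hyperplane `w` crosses the set `K` -/
def Crosses (w : X.Wall) (K : Set X.V) : Prop := ∃ a ∈ K, ∃ b ∈ K, X.Sep w a b

/-- two subcomplexes are parallel if exactly the same hyperplanes cross them -/
def ParallelSet (K K' : Set X.V) : Prop := ∀ w : X.Wall, X.Crosses w K ↔ X.Crosses w K'

/-- the vertex set of the carrier `N(w)` of the hyperplane `w` -/
def carrier (w : X.Wall) : Set X.V := {x | ∃ y, X.d x y = 1 ∧ X.Sep w x y}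

end CubeComplex

/-- A convex subcomplex of a CAT(0) cube complex, together with its gate
(closest-point projection) map, characterized by the property that a
hyperplane separates `x` from `gate x` iff it separates `x` from the
subcomplex. -/
structure ConvexSub (X : CubeComplex) where
  carrier : Set X.V
  nonempty : carrier.Nonempty
  convex : X.IsConvex carrier
  gate : X.V → X.V
  gate_mem : ∀ x, gate x ∈ carrier
  gate_idem : ∀ x ∈ carrier, gate x = x
  gate_sep : ∀ x w, X.Sep w x (gate x) ↔ X.SepFrom w x carrier

/-- the contact graph of a CAT(0) cube complex: vertices are hyperplanes, two
hyperplanes are adjacent iff their carriers intersect (cross or osculate) -/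
def CubeComplex.contactGraph (X : CubeComplex) : SimpleGraph X.Wall where
  Adj w w' := w ≠ w' ∧ (X.carrier w ∩ X.carrier w').Nonempty
  symm := ⟨by
    rintro w w' ⟨hne, x, hx1, hx2⟩
    exact ⟨Ne.symm hne, x, hx2, hx1⟩⟩
  loopless := ⟨fun w h => h.1 rfl⟩

/-- the defining predicate of the geometric realization of the flag complex on
a graph `G`: finitely supported convex coefficients whose support is a clique -/
def FlagPred {ι : Type} (G : SimpleGraph ι) (f : ι → ℝ) : Prop :=
  (∀ i, 0 ≤ f i) ∧ (Function.support f).Finite ∧ (∑ᶠ i, f i) = 1 ∧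
    (Function.support f).Pairwise G.Adj

/-- the geometric realization of the flag simplicial complex whose 1-skeleton
is the graph `G` (the contact complex, when `G` is the contact graph) -/
def FlagRealization {ι : Type} (G : SimpleGraph ι) : Type :=
  {f : ι → ℝ // FlagPred G f}

instance {ι : Type} (G : SimpleGraph ι) : TopologicalSpace (FlagRealization G) :=
  inferInstanceAs (TopologicalSpace {f : ι → ℝ // FlagPred G f})

namespace CubeComplex

variable (X : CubeComplex)

/-- two hyperplanes cross: all four quarter-spaces are nonempty -/
def Cross (w w' : X.Wall) : Prop :=
  (∃ x, X.side w x ∧ X.side w' x) ∧ (∃ x, X.side w x ∧ ¬ X.side w' x) ∧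
  (∃ x, ¬ X.side w x ∧ X.side w' x) ∧ (∃ x, ¬ X.side w x ∧ ¬ X.side w' x)

/-- a combinatorial geodesic, recorded by its sequence of `0`--cubes -/
def IsGeodesicSeq {n : ℕ} (α : Fin (n + 1) → X.V) : Prop :=
  ∀ i j : Fin (n + 1), X.d (α i) (α j) = max (i : ℕ) (j : ℕ) - min (i : ℕ) (j : ℕ)

/-- the carrier of the hyperplane `w` inside the subcomplex `K` -/
def carrierIn (K : Set X.V) (w : X.Wall) : Set X.V :=
  {x | x ∈ K ∧ ∃ y ∈ K, X.d x y = 1 ∧ X.Sep w x y}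

end CubeComplex


section Aux

open CubeComplex

/-- In an edge (distance-one pair), the dual wall is the unique separating wall. -/
lemma sep_side_iff (X : CubeComplex) {a a' : X.V} (h1 : X.d a a' = 1)
    {u w : X.Wall} (hw : X.Sep w a a') (hu : u ≠ w) :
    X.side u a ↔ X.side u a' := by
  have hS : {v : X.Wall | ¬ (X.side v a ↔ X.side v a')}.ncard = 1 := by
    rw [← X.d_eq]; exact h1
  obtain ⟨c, hc⟩ := Set.ncard_eq_one.mp hS
  have hwc : w = c := by
    have : w ∈ ({c} : Set X.Wall) := hc ▸ hw
    simpa using this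
  by_contra h
  have hucm : u ∈ ({c} : Set X.Wall) := hc ▸ h
  have huc : u = c := by simpa using hucm
  exact hu (huc.trans hwc.symm)

/-- A wall separating the gates of `x` and `y` separates `x` from `y`. -/
lemma sep_of_sep_gates (X : CubeComplex) (K : ConvexSub X) {x y : X.V}
    {w' : X.Wall} (h : X.Sep w' (K.gate x) (K.gate y)) : X.Sep w' x y := by
  intro hxy
  have hgx := K.gate_mem x
  have hgy := K.gate_mem y
  by_cases h1 : X.Sep w' x (K.gate x)
  · have := (K.gate_sep x w').mp h1 (K.gate y) hgy
    simp only [CubeComplex.Sep] at *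
    tauto
  · have h2 : X.Sep w' y (K.gate y) := by
      simp only [CubeComplex.Sep] at *
      tauto
    have := (K.gate_sep y w').mp h2 (K.gate x) hgx
    simp only [CubeComplex.Sep] at *
    tauto

set_option maxHeartbeats 2000000 in
/-- Two points of the carrier of `w` on the same side of `w`, separated by a
wall `w' ≠ w`, witness a crossing of `w` and `w'`. -/
lemma cross_of_carrier (X : CubeComplex) {w w' : X.Wall} {a b : X.V}
    (ha : a ∈ X.carrier w) (hb : b ∈ X.carrier w)
    (hside : X.side w a ↔ X.side w b)
    (hsep : X.Sep w' a b) (hne : w' ≠ w) : X.Cross w w' := by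
  obtain ⟨a', hda, hsa⟩ := ha
  obtain ⟨b', hdb, hsb⟩ := hb
  have hpa : X.side w' a ↔ X.side w' a' := sep_side_iff X hda hsa hne
  have hpb : X.side w' b ↔ X.side w' b' := sep_side_iff X hdb hsb hne
  simp only [CubeComplex.Sep] at hsa hsb hsep
  by_cases h1 : X.side w a <;> by_cases h2 : X.side w' a
  · exact ⟨⟨a, h1, h2⟩, ⟨b, by tauto, by tauto⟩, ⟨a', by tauto, by tauto⟩,
      ⟨b', by tauto, by tauto⟩⟩
  · exact ⟨⟨b, by tauto, by tauto⟩, ⟨a, h1, h2⟩, ⟨b', by tauto, by tauto⟩,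
      ⟨a', by tauto, by tauto⟩⟩
  · exact ⟨⟨a', by tauto, by tauto⟩, ⟨b', by tauto, by tauto⟩, ⟨a, h1, h2⟩,
      ⟨b, by tauto, by tauto⟩⟩
  · exact ⟨⟨b', by tauto, by tauto⟩, ⟨a', by tauto, by tauto⟩, ⟨b, by tauto, by tauto⟩,
      ⟨a, h1, h2⟩⟩

/-- If no wall separates `g` from `g'`, and both lie in `K`, they have the same
carrier-in-`K` data. -/
lemma carrierIn_eq_of_no_sep (X : CubeComplex) (K : Set X.V) {g g' : X.V}
    (hg : g ∈ K) (hg' : g' ∈ K)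
    (hns : ∀ u : X.Wall, ¬ X.Sep u g g') :
    {w' : X.Wall | g ∈ X.carrierIn K w'} = {w' : X.Wall | g' ∈ X.carrierIn K w'} := by
  have hiff : ∀ u : X.Wall, X.side u g ↔ X.side u g' := by
    intro u
    have := hns u
    simp only [CubeComplex.Sep] at this
    tauto
  have hd : ∀ z : X.V, X.d g z = X.d g' z := by
    intro z
    rw [X.d_eq, X.d_eq]
    congr 1
    ext u
    simp only [Set.mem_setOf_eq, hiff u]
  ext w'
  simp only [Set.mem_setOf_eq, CubeComplex.carrierIn, CubeComplex.Sep]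
  constructor
  · rintro ⟨-, y, hy, hdy, hsy⟩
    exact ⟨hg', y, hy, (hd y) ▸ hdy, fun h => hsy ((hiff w').trans h)⟩
  · rintro ⟨-, y, hy, hdy, hsy⟩
    exact ⟨hg, y, hy, (hd y).symm ▸ hdy, fun h => hsy ((hiff w').symm.trans h)⟩

end Aux

/-- **Bounded geodesic image for contact graphs.** Let `w` be a
hyperplane with combinatorial hyperplane `H⁺` (realized as a convex
subcomplex `K`), and let `α` be a combinatorial geodesic none of whose dual
hyperplanes lies in the closed `1`--ball about `w` in the crossing graph
(i.e. none equals `w` or crosses `w`).  Then the projection `π_w(α)` to the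
contact graph of `H⁺` is a single clique: all `0`--cubes of `α` have the same
projection, and that projection is a clique of `𝒞X`. -/
theorem bounded_geodesic_image_contact (X : CubeComplex) (w : X.Wall)
    (K : ConvexSub X)
    (hK : K.carrier = {x | x ∈ X.carrier w ∧ X.side w x} ∨
          K.carrier = {x | x ∈ X.carrier w ∧ ¬ X.side w x})
    {n : ℕ} (α : Fin (n + 1) → X.V) (hα : X.IsGeodesicSeq α)
    (hdisj : ∀ k : Fin n, ∀ w' : X.Wall,
      X.Sep w' (α k.castSucc) (α k.succ) → w' ≠ w ∧ ¬ X.Cross w w') :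
    (∀ s t : Fin (n + 1),
      {w' : X.Wall | K.gate (α s) ∈ X.carrierIn K.carrier w'} =
      {w' : X.Wall | K.gate (α t) ∈ X.carrierIn K.carrier w'}) ∧
    (∀ w₁ ∈ {w' : X.Wall | K.gate (α 0) ∈ X.carrierIn K.carrier w'},
     ∀ w₂ ∈ {w' : X.Wall | K.gate (α 0) ∈ X.carrierIn K.carrier w'},
        w₁ = w₂ ∨ X.contactGraph.Adj w₁ w₂) := by

  -- gates of consecutive vertices are not separated by any wall
  have key : ∀ k : Fin n, ∀ u : X.Wall,
      ¬ X.Sep u (K.gate (α k.castSucc)) (K.gate (α k.succ)) := by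
    intro k u hu
    have hsepxy : X.Sep u (α k.castSucc) (α k.succ) := sep_of_sep_gates X K hu
    obtain ⟨hne, hncross⟩ := hdisj k u hsepxy
    have hga := K.gate_mem (α k.castSucc)
    have hgb := K.gate_mem (α k.succ)
    rcases hK with hK | hK
    · rw [hK] at hga hgb
      simp only [Set.mem_setOf_eq] at hga hgb
      exact hncross (cross_of_carrier X hga.1 hgb.1 (iff_of_true hga.2 hgb.2) hu hne)
    · rw [hK] at hga hgb
      simp only [Set.mem_setOf_eq] at hga hgb
      exact hncross (cross_of_carrier X hga.1 hgb.1 (iff_of_false hga.2 hgb.2) hu hne)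
  -- consecutive projections agree
  have step : ∀ k : Fin n,
      {w' : X.Wall | K.gate (α k.castSucc) ∈ X.carrierIn K.carrier w'} =
      {w' : X.Wall | K.gate (α k.succ) ∈ X.carrierIn K.carrier w'} := fun k =>
    carrierIn_eq_of_no_sep X K.carrier (K.gate_mem _) (K.gate_mem _) (key k)
  have const : ∀ m : ℕ, ∀ hm : m < n + 1,
      {w' : X.Wall | K.gate (α ⟨m, hm⟩) ∈ X.carrierIn K.carrier w'} =
      {w' : X.Wall | K.gate (α 0) ∈ X.carrierIn K.carrier w'} := by
    intro m
    induction m with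
    | zero => intro hm; rfl
    | succ m ih =>
      intro hm
      have hmn : m < n := Nat.lt_of_succ_lt_succ hm
      have h1 : (⟨m, hmn⟩ : Fin n).castSucc = ⟨m, Nat.lt_of_lt_of_le hmn (Nat.le_succ n)⟩ := rfl
      have h2 : (⟨m, hmn⟩ : Fin n).succ = ⟨m + 1, hm⟩ := rfl
      have := step ⟨m, hmn⟩
      rw [h1, h2] at this
      rw [← this]
      exact ih _
  constructor
  · intro s t
    have hs := const s.1 s.2
    have ht := const t.1 t.2
    simp only [Fin.eta] at hs ht
    rw [hs, ht]
  · intro w1 hw1 w2 hw2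
    by_cases h : w1 = w2
    · exact Or.inl h
    · refine Or.inr ⟨h, K.gate (α 0), ?_, ?_⟩
      · obtain ⟨-, y, -, hdy, hsy⟩ := hw1
        exact ⟨y, hdy, hsy⟩
      · obtain ⟨-, y, -, hdy, hsy⟩ := hw2
        exact ⟨y, hdy, hsy⟩
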